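/- For α ∈ ℝ \ {2,5,6}, define the 3×3 matrix P_α^1 = (1/((2-α)(5-α))) · [[(2-α)(5-α), 0, 0], [4-α, 4-α, 2], [4-α, 2, 4-α]]. Then P_α^1 has eigenvalues 1, (6-α)/((2-α)(5-α)), and 1/(5-α); in particular P_α^1 is invertible. -/

import Mathlib

open Polynomial

lemma aux_charpoly (a b c : ℝ) :
    Matrix.charpoly !![(1:ℝ),0,0; a, b, c; a, c, b] =
      (X - C 1) * (X - C (b+c)) * (X - C (b-c)) := by
  rw [Matrix.charpoly, Matrix.det_fin_three]
  simp [Matrix.charmatrix_apply, Matrix.one_apply]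
  ring

theorem decimation_matrix_eigenvalues (α : ℝ) (h2 : α ≠ 2) (h5 : α ≠ 5) (h6 : α ≠ 6)
    (P : Matrix (Fin 3) (Fin 3) ℝ)
    (hP : P = ((2 - α) * (5 - α))⁻¹ •
      !![(2 - α) * (5 - α), 0, 0; 4 - α, 4 - α, 2; 4 - α, 2, 4 - α]) :
    P.charpoly = (X - C 1) * (X - C ((6 - α) / ((2 - α) * (5 - α)))) *
      (X - C (1 / (5 - α))) ∧ P.det ≠ 0 := by
  have h2' : (2:ℝ) - α ≠ 0 := by intro h; apply h2; linarith
  have h5' : (5:ℝ) - α ≠ 0 := by intro h; apply h5; linarith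
  have h6' : (6:ℝ) - α ≠ 0 := by intro h; apply h6; linarith
  set s : ℝ := ((2 - α) * (5 - α))⁻¹ with hs
  have hPE : P = !![(1:ℝ),0,0; s*(4-α), s*(4-α), s*2; s*(4-α), s*2, s*(4-α)] := by
    subst hP
    simp [hs, Matrix.smul_cons, smul_eq_mul]
    have : (5 - α)⁻¹ * (2 - α)⁻¹ * ((2 - α) * (5 - α)) = 1 := by field_simp
    rw [this]
  have hbc1 : s*(4-α) + s*2 = (6 - α) / ((2 - α) * (5 - α)) := by
    rw [hs, eq_div_iff (mul_ne_zero h2' h5')]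
    field_simp
    ring
  have hbc2 : s*(4-α) - s*2 = 1 / (5 - α) := by
    rw [hs, eq_div_iff h5']
    field_simp
    ring
  have h1 : (s*(4-α) + s*2) * (s*(4-α) - s*2) ≠ 0 := by
    apply mul_ne_zero
    · rw [hbc1]; exact div_ne_zero h6' (mul_ne_zero h2' h5')
    · rw [hbc2]; exact one_div_ne_zero h5'
  constructor
  · rw [hPE, aux_charpoly, hbc1, hbc2]
  · rw [hPE, Matrix.det_fin_three]
    simp only [Matrix.cons_val', Matrix.cons_val_zero, Matrix.cons_val_one, Matrix.head_cons,
      Matrix.empty_val', Matrix.cons_val_fin_one, Matrix.head_fin_const, Matrix.of_apply,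
      Matrix.cons_val_two, Matrix.tail_cons]
    intro h
    apply h1
    nlinarith [h]
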